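/- Let W be a group generated by a finite set X, and suppose there exists a surjective group homomorphism η : W → H onto a group H that admits an unbounded homogeneous quasimorphism. Then the bi-invariant word norm ‖·‖_{X*} is unbounded on W. -/

import Mathlib

/-- The set of conjugates of elements of `X`. -/
def conjugates {G : Type*} [Group G] (X : Set G) : Set G :=
  {a | ∃ x ∈ X, ∃ g : G, a = g * x * g⁻¹}

/-- The bi-invariant word norm of `g` with respect to the generating set `X`:
the least `n` such that `g` is a product of `n` conjugates of elements of `X`. -/
noncomputable def biInvariantWordNorm {G : Type*} [Group G] (X : Set G) (g : G) : ℕ :=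
  sInf {n | ∃ l : List G, l.length = n ∧ (∀ a ∈ l, a ∈ conjugates X) ∧ l.prod = g}

/-- A group is virtually abelian if it has an abelian subgroup of finite index. -/
def IsVirtuallyAbelian (G : Type*) [Group G] : Prop :=
  ∃ H : Subgroup G, H.FiniteIndex ∧ ∀ a b : H, a * b = b * a

/-- A quasimorphism: the defect `|φ(gh) - φ(g) - φ(h)|` is uniformly bounded. -/
def IsQuasimorphism {G : Type*} [Group G] (φ : G → ℝ) : Prop :=
  ∃ C : ℝ, ∀ g h : G, |φ (g * h) - φ g - φ h| ≤ C

/-- A homogeneous function: `φ(gⁿ) = n • φ(g)` for all integers `n`. -/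
def IsHomogeneous {G : Type*} [Group G] (φ : G → ℝ) : Prop :=
  ∀ (g : G) (n : ℤ), φ (g ^ n) = n * φ g

/-- If a group `W` with finite generating set `X` surjects onto a group `H`
admitting an unbounded homogeneous quasimorphism, then the bi-invariant word norm
`‖·‖_{X*}` is unbounded on `W`. -/
theorem biInvariantWordNorm_unbounded_of_surjection_onto_quasimorphism_group
    {W H : Type*} [Group W] [Group H]
    (X : Set W) (hXfin : X.Finite) (hXgen : Subgroup.closure X = ⊤)
    (η : W →* H) (hη : Function.Surjective η)
    (hφ : ∃ φ : H → ℝ, IsQuasimorphism φ ∧ IsHomogeneous φ ∧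
      ¬ Bornology.IsBounded (Set.range φ)) :
    ∀ N : ℕ, ∃ w : W, N < biInvariantWordNorm X w := by
  obtain ⟨φ, ⟨C, hC⟩, hhom, hunb⟩ := hφ
  set ψ : W → ℝ := fun w => φ (η w) with hψdef
  have hψC : ∀ g h : W, |ψ (g * h) - ψ g - ψ h| ≤ C := fun g h => by
    simpa [hψdef, map_mul] using hC (η g) (η h)
  have hψhom : ∀ (g : W) (n : ℤ), ψ (g ^ n) = n * ψ g := fun g n => by
    simpa [hψdef, map_zpow] using hhom (η g) n
  have hψ1 : ψ 1 = 0 := by simpa using hψhom 1 0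
  have hC0 : 0 ≤ C := by
    have := hψC 1 1
    simp only [one_mul, hψ1, sub_zero, abs_zero] at this
    exact this
  have hψinv : ∀ g : W, ψ g⁻¹ = -ψ g := by
    intro g
    have := hψhom g (-1)
    simpa using this
  -- conjugation invariance
  have hconj : ∀ g x : W, ψ (g * x * g⁻¹) = ψ x := by
    intro g x
    have key : ∀ n : ℕ, (n : ℝ) * |ψ (g * x * g⁻¹) - ψ x| ≤ 2 * C := by
      intro n
      have e : (g * x * g⁻¹) ^ (n : ℤ) = g * (x ^ (n : ℤ) * g⁻¹) := by
        rw [conj_zpow]; group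
      have h1 := hψC g (x ^ (n : ℤ) * g⁻¹)
      have h2 := hψC (x ^ (n : ℤ)) g⁻¹
      have h3 : ψ ((g * x * g⁻¹) ^ (n : ℤ)) = (n : ℝ) * ψ (g * x * g⁻¹) :=
        hψhom _ _
      have h4 : ψ (x ^ (n : ℤ)) = (n : ℝ) * ψ x := hψhom _ _
      rw [e] at h3
      have hg := hψinv g
      have habs : |(n : ℝ) * ψ (g * x * g⁻¹) - (n : ℝ) * ψ x| ≤ 2 * C := by
        rw [abs_le] at h1 h2 ⊢
        constructor <;> nlinarith [h1.1, h1.2, h2.1, h2.2]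
      calc (n : ℝ) * |ψ (g * x * g⁻¹) - ψ x|
          = |(n : ℝ) * ψ (g * x * g⁻¹) - (n : ℝ) * ψ x| := by
            rw [← mul_sub, abs_mul, abs_of_nonneg (by positivity : (0:ℝ) ≤ (n:ℝ))]
        _ ≤ 2 * C := habs
    by_contra hne
    have hd : 0 < |ψ (g * x * g⁻¹) - ψ x| := by
      rcases (abs_nonneg (ψ (g * x * g⁻¹) - ψ x)).lt_or_eq with h | h
      · exact h
      · exact absurd (sub_eq_zero.mp (abs_eq_zero.mp h.symm)) hne
    obtain ⟨n, hn⟩ := exists_nat_gt (2 * C / |ψ (g * x * g⁻¹) - ψ x|)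
    have := key n
    have : 2 * C / |ψ (g * x * g⁻¹) - ψ x| < (n : ℝ) := hn
    have h2 : 2 * C < (n : ℝ) * |ψ (g * x * g⁻¹) - ψ x| := by
      rw [div_lt_iff₀ hd] at this; linarith
    linarith [key n]
  -- bound on generators
  obtain ⟨M, hM⟩ : ∃ M, ∀ x ∈ X, |ψ x| ≤ M := by
    obtain ⟨M, hM⟩ := (hXfin.image fun x => |ψ x|).bddAbove
    exact ⟨M, fun x hx => hM (Set.mem_image_of_mem _ hx)⟩
  set K : ℝ := max M 0 + C with hKdef
  have hK0 : 0 ≤ K := by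
    have : (0:ℝ) ≤ max M 0 := le_max_right _ _
    linarith
  have hconjbound : ∀ a ∈ conjugates X, |ψ a| ≤ max M 0 := by
    rintro a ⟨x, hx, g, rfl⟩
    rw [hconj g x]
    exact le_trans (hM x hx) (le_max_left _ _)
  -- estimate on products of conjugates
  have hlist : ∀ l : List W, (∀ a ∈ l, a ∈ conjugates X) →
      |ψ l.prod| ≤ l.length * K := by
    intro l
    induction l with
    | nil => intro _; simp [hψ1]
    | cons a t ih =>
      intro h
      have ha := hconjbound a (h a List.mem_cons_self)
      have ht := ih fun b hb => h b (List.mem_cons_of_mem a hb)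
      have hq := hψC a t.prod
      rw [List.prod_cons, List.length_cons]
      push_cast
      rw [abs_le] at hq ⊢
      constructor <;> nlinarith [abs_le.mp ha, abs_le.mp ht, hq.1, hq.2]
  -- decomposition: every element is p * q⁻¹ with p, q products of conjugates
  have hconjlist : ∀ (g : W) (l : List W), (∀ a ∈ l, a ∈ conjugates X) →
      ∃ l' : List W, (∀ a ∈ l', a ∈ conjugates X) ∧ l'.prod = g * l.prod * g⁻¹ := by
    intro g l hl
    refine ⟨l.map fun a => (MulAut.conj g) a, ?_, ?_⟩
    · intro a ha
      simp only [List.mem_map] at ha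
      obtain ⟨b, hb, rfl⟩ := ha
      obtain ⟨x, hx, c, rfl⟩ := hl b hb
      exact ⟨x, hx, g * c, by simp [MulAut.conj_apply]; group⟩
    · rw [show (fun a => (MulAut.conj g) a) = ⇑(MulAut.conj g) from rfl,
        List.prod_hom l (MulAut.conj g)]
      simp [MulAut.conj_apply]
  have hdecomp : ∀ w : W, ∃ lp lq : List W,
      (∀ a ∈ lp, a ∈ conjugates X) ∧ (∀ a ∈ lq, a ∈ conjugates X) ∧
      w = lp.prod * lq.prod⁻¹ := by
    intro w
    have hw : w ∈ Subgroup.closure X := hXgen ▸ Subgroup.mem_top w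
    induction hw using Subgroup.closure_induction with
    | mem x hx =>
      exact ⟨[x], [], by simpa using ⟨x, hx, 1, by group⟩, by simp, by simp⟩
    | one => exact ⟨[], [], by simp, by simp, by simp⟩
    | mul u v _ _ hu hv =>
      obtain ⟨p, q, hp, hq, rfl⟩ := hu
      obtain ⟨r, s, hr, hs, rfl⟩ := hv
      obtain ⟨r', hr', hr'prod⟩ := hconjlist q.prod⁻¹ r hr
      refine ⟨p ++ r', s ++ q, ?_, ?_, ?_⟩
      · intro a ha
        rcases List.mem_append.mp ha with h | h
        exacts [hp a h, hr' a h]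
      · intro a ha
        rcases List.mem_append.mp ha with h | h
        exacts [hs a h, hq a h]
      · rw [List.prod_append, List.prod_append, hr'prod]
        group
    | inv u _ hu =>
      obtain ⟨p, q, hp, hq, rfl⟩ := hu
      exact ⟨q, p, hq, hp, by group⟩
  -- key lemma: a product of conjugates with large |ψ| has large norm
  intro N
  set B : ℝ := ((N : ℝ) + 1) * K with hBdef
  have key : ∀ (w : W) (l : List W), (∀ a ∈ l, a ∈ conjugates X) → l.prod = w →
      B < |ψ w| → N < biInvariantWordNorm X w := by
    intro w l hl hlp hB
    have hne : {n | ∃ l : List W, l.length = n ∧ (∀ a ∈ l, a ∈ conjugates X) ∧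
        l.prod = w}.Nonempty := ⟨l.length, l, rfl, hl, hlp⟩
    obtain ⟨l', hlen, hl', hprod⟩ := Nat.sInf_mem hne
    have hb := hlist l' hl'
    rw [hprod, hlen] at hb
    by_contra hle
    push_neg at hle
    have hle' : (biInvariantWordNorm X w : ℝ) ≤ (N : ℝ) := by exact_mod_cast hle
    have : (biInvariantWordNorm X w : ℝ) * K ≤ ((N : ℝ) + 1) * K := by nlinarith
    unfold biInvariantWordNorm at this
    rw [hBdef] at hB
    unfold biInvariantWordNorm at hle'
    nlinarith [hb, hB]
  -- find an element with large |ψ|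
  obtain ⟨r, hr, habs⟩ : ∃ r ∈ Set.range φ, 2 * B + C < |r| := by
    by_contra hcon
    push_neg at hcon
    exact hunb (isBounded_iff_forall_norm_le.mpr
      ⟨2 * B + C, fun x hx => by simpa [Real.norm_eq_abs] using hcon x hx⟩)
  obtain ⟨h0, rfl⟩ := hr
  obtain ⟨w₀, rfl⟩ := hη h0
  have hw₀ : 2 * B + C < |ψ w₀| := habs
  obtain ⟨lp, lq, hlp, hlq, hw⟩ := hdecomp w₀
  have hsplit : |ψ w₀| ≤ |ψ lp.prod| + |ψ lq.prod| + C := by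
    have h1 := hψC lp.prod lq.prod⁻¹
    have h2 := hψinv lq.prod
    rw [hw]
    rw [abs_le] at h1
    have := abs_le.mp (le_refl |ψ lp.prod|)
    calc |ψ (lp.prod * lq.prod⁻¹)|
        ≤ |ψ lp.prod + ψ lq.prod⁻¹| + C := by
          rw [abs_le] at *
          constructor <;> [nlinarith [h1.1, abs_nonneg (ψ lp.prod + ψ lq.prod⁻¹),
            neg_abs_le (ψ lp.prod + ψ lq.prod⁻¹)]; nlinarith [h1.2,
            le_abs_self (ψ lp.prod + ψ lq.prod⁻¹)]]
      _ ≤ |ψ lp.prod| + |ψ lq.prod| + C := by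
          rw [h2]
          have := abs_add_le (ψ lp.prod) (-ψ lq.prod)
          simpa [abs_neg] using add_le_add_right this C
  by_cases hcase : B < |ψ lp.prod|
  · exact ⟨lp.prod, key lp.prod lp hlp rfl hcase⟩
  · push_neg at hcase
    have : B < |ψ lq.prod| := by linarith
    exact ⟨lq.prod, key lq.prod lq hlq rfl this⟩
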